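/- Let t be a positive integer with t congruent to 2 modulo 4 whose square-free part contains at least one odd prime factor congruent to 2 modulo 3. Then there do not exist three vectors in Q^3, each with squared Euclidean norm t, summing to the zero vector; that is, the graph G(Q^3, sqrt(t)) contains no triangle. -/

import Mathlib

section AuxNoRationalTriangle

variable {p : ℕ} [Fact p.Prime]

private lemma aux_neg_three_not_square (hp2 : p ≠ 2) (hp3 : p % 3 = 2) :
    ¬ IsSquare (-3 : ZMod p) := by
  have hp3' : p ≠ 3 := fun h => by simp [h] at hp3
  have hpodd : p % 2 = 1 := (Nat.Prime.eq_two_or_odd (Fact.out)).resolve_left hp2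
  have h1 : legendreSym p (-3) = legendreSym p (-1) * legendreSym p 3 := by
    rw [← legendreSym.mul]; norm_num
  have h2 : legendreSym p (-1) = (-1 : ℤ) ^ (p / 2) := by
    rw [legendreSym.at_neg_one hp2, ZMod.χ₄_eq_neg_one_pow hpodd]
  have hrec := legendreSym.quadratic_reciprocity (p := 3) (q := p) (by norm_num) hp2
    (fun h => hp3' h.symm)
  push_cast at hrec
  have h3 : legendreSym 3 ((p : ℤ)) = -1 := by
    rw [legendreSym.mod]
    have h30 : ((p:ℤ)) % ((3:ℕ):ℤ) = 2 := by push_cast; omega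
    rw [h30]
    decide
  have h4 : legendreSym p 3 = -(-1 : ℤ) ^ (p / 2) := by
    rw [h3] at hrec
    rw [one_mul] at hrec
    linear_combination -hrec
  have h5 : legendreSym p (-3) = -1 := by
    rw [h1, h2, h4]
    rcases Nat.even_or_odd (p / 2) with he | ho
    · simp [he.neg_one_pow]
    · simp [ho.neg_one_pow]
  intro hsq
  have h6 : ¬ IsSquare (((-3 : ℤ)) : ZMod p) := (legendreSym.eq_neg_one_iff p).mp h5
  apply h6
  convert hsq using 2
  push_cast
  ring

private lemma aux_zmod_aniso (hns : ¬ IsSquare (-3 : ZMod p))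
    (x y : ZMod p) (h : x^2 - x*y + y^2 = 0) : x = 0 ∧ y = 0 := by
  by_cases hy : y = 0
  · refine ⟨?_, hy⟩
    rw [hy] at h
    have : x^2 = 0 := by linear_combination h
    exact pow_eq_zero_iff (n := 2) (by norm_num) |>.mp this
  · exfalso
    apply hns
    refine ⟨(2*x - y) / y, ?_⟩
    field_simp
    linear_combination (-4 : ZMod p) * h

private lemma aux_toZMod_zero_iff (z : ℤ_[p]) : PadicInt.toZMod z = 0 ↔ ‖z‖ < 1 := by
  rw [← RingHom.mem_ker, PadicInt.ker_toZMod, PadicInt.maximalIdeal_eq_span_p,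
    Ideal.mem_span_singleton, ← PadicInt.norm_lt_one_iff_dvd]

private lemma aux_norm_one_of_toZMod_ne (z : ℤ_[p]) (h : PadicInt.toZMod z ≠ 0) : ‖z‖ = 1 := by
  refine le_antisymm (PadicInt.norm_le_one z) ?_
  by_contra hlt
  exact h ((aux_toZMod_zero_iff z).mpr (lt_of_not_ge hlt))

private lemma aux_val_zero_of_norm_one (x : ℚ_[p]) (h : ‖x‖ = 1) : x ≠ 0 ∧ x.valuation = 0 := by
  have hx : x ≠ 0 := by intro h0; rw [h0, norm_zero] at h; norm_num at h
  refine ⟨hx, ?_⟩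
  have hne := Padic.norm_eq_zpow_neg_valuation hx
  rw [h] at hne
  have hp1 : (1 : ℝ) < (p : ℝ) := by exact_mod_cast (Fact.out : p.Prime).one_lt
  have := (zpow_right_strictMono₀ hp1).injective (a₁ := (0:ℤ)) (a₂ := -x.valuation) (by
    rw [zpow_zero]; exact hne)
  omega

private lemma aux_norm_q_one (hns : ¬ IsSquare (-3 : ZMod p)) (e : ℚ_[p]) (he : ‖e‖ ≤ 1) :
    ‖e^2 - e + 1‖ = 1 := by
  set z : ℤ_[p] := ⟨e, he⟩ with hz
  have hcoe : ((z^2 - z + 1 : ℤ_[p]) : ℚ_[p]) = e^2 - e + 1 := by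
    push_cast
    rfl
  rw [← hcoe, ← PadicInt.norm_def]
  apply aux_norm_one_of_toZMod_ne
  intro h0
  have hq : (PadicInt.toZMod z)^2 - (PadicInt.toZMod z) * 1 + 1^2 = 0 := by
    simp only [map_add, map_sub, map_pow, map_one] at h0
    linear_combination h0
  obtain ⟨-, h1⟩ := aux_zmod_aniso hns _ _ hq
  exact one_ne_zero h1

private lemma aux_q_val_even_aux (hns : ¬ IsSquare (-3 : ZMod p)) (α β : ℚ_[p]) (hβ : β ≠ 0)
    (hle : ‖α‖ ≤ ‖β‖) :
    α^2 - α*β + β^2 ≠ 0 ∧ ∃ k : ℤ, (α^2 - α*β + β^2).valuation = 2*k := by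
  have hd : ‖α / β‖ ≤ 1 := by
    rw [norm_div, div_le_one (norm_pos_iff.mpr hβ)]
    exact hle
  have hr := aux_norm_q_one hns (α/β) hd
  obtain ⟨hrne, hrv⟩ := aux_val_zero_of_norm_one _ hr
  have hq : α^2 - α*β + β^2 = (β * β) * ((α/β)^2 - (α/β) + 1) := by
    field_simp
  rw [hq]
  refine ⟨mul_ne_zero (mul_ne_zero hβ hβ) hrne, ⟨β.valuation, ?_⟩⟩
  rw [Padic.valuation_mul (mul_ne_zero hβ hβ) hrne,
    Padic.valuation_mul hβ hβ, hrv]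
  ring

private lemma aux_q_val_even (hns : ¬ IsSquare (-3 : ZMod p)) (α β : ℚ_[p])
    (h : ¬(α = 0 ∧ β = 0)) :
    α^2 - α*β + β^2 ≠ 0 ∧ ∃ k : ℤ, (α^2 - α*β + β^2).valuation = 2*k := by
  rcases le_total ‖α‖ ‖β‖ with hle | hle
  · have hβ : β ≠ 0 := by
      intro h0
      apply h
      rw [h0, norm_zero] at hle
      exact ⟨norm_le_zero_iff.mp hle, h0⟩
    exact aux_q_val_even_aux hns α β hβ hle
  · have hα : α ≠ 0 := by
      intro h0
      apply h
      rw [h0, norm_zero] at hle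
      exact ⟨h0, norm_le_zero_iff.mp hle⟩
    have hsymm : α^2 - α*β + β^2 = β^2 - β*α + α^2 := by ring
    rw [hsymm]
    exact aux_q_val_even_aux hns β α hα hle

private lemma aux_exists_isotropic (hp2 : p ≠ 2) : ∃ x y : ℚ_[p], x^2 + y^2 + 1 = 0 := by
  obtain ⟨a, b, hab⟩ := ZMod.sq_add_sq p (-1 : ZMod p)
  have hm1 : (-1 : ZMod p) ≠ 0 := by
    simp only [ne_eq, neg_eq_zero]
    exact one_ne_zero
  obtain ⟨x₀, u₀, hu₀, hxu⟩ : ∃ x₀ u₀ : ZMod p, u₀ ≠ 0 ∧ x₀^2 + u₀^2 = -1 := by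
    by_cases hb : b = 0
    · refine ⟨b, a, ?_, ?_⟩
      · intro h0
        apply hm1
        rw [h0, hb] at hab
        linear_combination -hab
      · rw [hb] at hab ⊢
        linear_combination hab
    · exact ⟨a, b, hb, hab⟩
  set ξ : ℤ_[p] := (x₀.val : ℤ_[p]) with hξ
  set a₀ : ℤ_[p] := (u₀.val : ℤ_[p]) with ha₀
  have htz : ∀ (w : ZMod p), PadicInt.toZMod ((w.val : ℤ_[p])) = w := by
    intro w
    rw [map_natCast]
    exact ZMod.natCast_rightInverse w
  set F : Polynomial ℤ_[p] := Polynomial.X^2 - Polynomial.C (-1 - ξ^2) with hF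
  have hFeval : F.eval a₀ = a₀^2 + 1 + ξ^2 := by
    simp [hF]
    ring
  have hFderiv : F.derivative.eval a₀ = 2 * a₀ := by
    simp [hF, Polynomial.derivative_pow]
  have hnorm1 : ‖F.derivative.eval a₀‖ = 1 := by
    rw [hFderiv, norm_mul]
    have h2 : ‖(2 : ℤ_[p])‖ = 1 := by
      apply aux_norm_one_of_toZMod_ne
      have h22 : ((2 : ℤ_[p])) = ((2:ℕ) : ℤ_[p]) := by norm_cast
      rw [h22, map_natCast]
      intro h0
      rw [ZMod.natCast_eq_zero_iff] at h0
      exact hp2 ((Nat.prime_dvd_prime_iff_eq Fact.out Nat.prime_two).mp h0)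
    have ha : ‖a₀‖ = 1 := by
      apply aux_norm_one_of_toZMod_ne
      rw [ha₀, htz]
      exact hu₀
    rw [h2, ha, one_mul]
  have hnormF : ‖F.eval a₀‖ < ‖F.derivative.eval a₀‖^2 := by
    rw [hnorm1, one_pow, hFeval]
    rw [← aux_toZMod_zero_iff]
    simp only [map_add, map_pow, map_one]
    rw [ha₀, hξ, htz, htz]
    linear_combination hxu
  obtain ⟨z, hz, -⟩ := hensels_lemma hnormF
  refine ⟨(ξ : ℚ_[p]), (z : ℚ_[p]), ?_⟩
  have hzF : z^2 - (-1 - ξ^2) = 0 := by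
    have he : F.eval z = z^2 - (-1 - ξ^2) := by
      simp [hF]
    rw [← he]
    exact hz
  have hz' : z^2 = -1 - ξ^2 := sub_eq_zero.mp hzF
  have hcast := congrArg (fun w : ℤ_[p] => (w : ℚ_[p])) hz'
  push_cast at hcast
  linear_combination hcast

end AuxNoRationalTriangle

/-- Let `t ≡ 2 (mod 4)` be a positive integer whose square-free part contains
an odd prime factor congruent to 2 mod 3. Then there do not exist three vectors in `ℚ³`,
each with squared Euclidean norm `t`, summing to the zero vector; i.e. the graph
`G(ℚ³, √t)` contains no triangle. -/
theorem no_rational_triangle_of_mem_T (t : ℕ) (ht : 0 < t) (hmod : t % 4 = 2)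
    (hT : ∃ p : ℕ, p.Prime ∧ p ≠ 2 ∧ p % 3 = 2 ∧ Odd (t.factorization p)) :
    ¬ ∃ v : Fin 3 → (Fin 3 → ℚ),
      (∀ i, ∑ j, (v i j) ^ 2 = (t : ℚ)) ∧ (∑ i, v i) = 0 := by
  rintro ⟨v, hnv, hsum⟩
  obtain ⟨p, hp, hp2, hp3, hodd⟩ := hT
  haveI : Fact p.Prime := ⟨hp⟩
  have hns := aux_neg_three_not_square (p := p) hp2 hp3
  have hp3' : p ≠ 3 := fun h => by simp [h] at hp3
  -- rational identities
  have h0 := hnv 0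
  have h1 := hnv 1
  have h2 := hnv 2
  rw [Fin.sum_univ_three] at h0 h1 h2
  have hv2 : ∀ j, v 2 j = -(v 0 j) - v 1 j := by
    intro j
    have hs := congrFun hsum j
    rw [Fin.sum_univ_three] at hs
    simp only [Pi.add_apply, Pi.zero_apply] at hs
    linarith
  rw [hv2 0, hv2 1, hv2 2] at h2
  have hab : v 0 0 * v 1 0 + v 0 1 * v 1 1 + v 0 2 * v 1 2 = -(t:ℚ)/2 := by
    linear_combination (h2 - h0 - h1) / 2
  -- move to ℚ_[p]
  set K := ℚ_[p]
  set a0 : K := ((v 0 0 : ℚ) : K) with ha0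
  set a1 : K := ((v 0 1 : ℚ) : K) with ha1
  set a2 : K := ((v 0 2 : ℚ) : K) with ha2
  set b0 : K := ((v 1 0 : ℚ) : K) with hb0
  set b1 : K := ((v 1 1 : ℚ) : K) with hb1
  set b2 : K := ((v 1 2 : ℚ) : K) with hb2
  set T : K := ((t : ℕ) : K) with hTdef
  have HA : a0^2 + a1^2 + a2^2 = T := by
    rw [ha0, ha1, ha2, hTdef]
    exact_mod_cast congrArg (fun q : ℚ => (q : K)) h0
  have HB : b0^2 + b1^2 + b2^2 = T := by
    rw [hb0, hb1, hb2, hTdef]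
    exact_mod_cast congrArg (fun q : ℚ => (q : K)) h1
  have HAB : a0*b0 + a1*b1 + a2*b2 = -T/2 := by
    rw [ha0, ha1, ha2, hb0, hb1, hb2, hTdef]
    have := congrArg (fun q : ℚ => (q : K)) hab
    push_cast at this ⊢
    convert this using 2
  have hT0 : T ≠ 0 := by
    rw [hTdef]
    exact Nat.cast_ne_zero.mpr ht.ne'
  -- matrix
  set M : Matrix (Fin 3) (Fin 3) K :=
    !![a0, a1, a2; b0, b1, b2;
       a1*b2 - a2*b1, a2*b0 - a0*b2, a0*b1 - a1*b0] with hM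
  have hdet : M.det = (3/4) * T^2 := by
    rw [hM]
    simp [Matrix.det_fin_three]
    linear_combination (b0^2 + b1^2 + b2^2) * HA + T * HB
      - (a0*b0 + a1*b1 + a2*b2 - T/2) * HAB
  have hdet0 : IsUnit M.transpose.det := by
    rw [Matrix.det_transpose, hdet]
    apply isUnit_iff_ne_zero.mpr
    apply mul_ne_zero
    · norm_num
    · exact pow_ne_zero 2 hT0
  obtain ⟨x, y, hxy⟩ := aux_exists_isotropic (p := p) hp2
  set c : Fin 3 → K := (M.transpose)⁻¹.mulVec ![x, y, 1] with hc
  have hMc : M.transpose.mulVec c = ![x, y, 1] := by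
    rw [hc, Matrix.mulVec_mulVec, Matrix.mul_nonsing_inv _ hdet0, Matrix.one_mulVec]
  have e0 := congrFun hMc 0
  have e1 := congrFun hMc 1
  have e2 := congrFun hMc 2
  simp [Matrix.mulVec, dotProduct, Fin.sum_univ_three, Matrix.transpose_apply,
    hM] at e0 e1 e2
  set c0 : K := c 0 with hc0
  set c1 : K := c 1 with hc1
  set c2 : K := c 2 with hc2
  have key : T*(c0^2 - c0*c1 + c1^2) + (3/4)*T^2*c2^2 = 0 := by
    linear_combination hxy + (a0*c0 + b0*c1 + (a1*b2 - a2*b1)*c2 + x)*e0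
      + (a1*c0 + b1*c1 + (a2*b0 - a0*b2)*c2 + y)*e1
      + (a2*c0 + b2*c1 + (a0*b1 - a1*b0)*c2 + 1)*e2
      - (c0^2 + c2^2*(b0^2+b1^2+b2^2))*HA - (c1^2 + c2^2*T)*HB
      - (2*c0*c1 - c2^2*(a0*b0+a1*b1+a2*b2 - T/2))*HAB
  -- now derive contradiction
  by_cases hc01 : c0 = 0 ∧ c1 = 0
  · obtain ⟨hz0, hz1⟩ := hc01
    have h34 : ((3:K)/4) * T^2 * c2^2 = 0 := by
      rw [hz0, hz1] at key
      linear_combination key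
    have hc2ne : c2 = 0 := by
      have h3ne : ((3:K)/4) ≠ 0 := by norm_num
      rcases mul_eq_zero.mp h34 with h' | h'
      · exfalso
        rcases mul_eq_zero.mp h' with h'' | h''
        · exact h3ne h''
        · exact pow_ne_zero 2 hT0 h''
      · exact pow_eq_zero_iff (n := 2) (by norm_num) |>.mp h'
    rw [hz0, hz1, hc2ne] at e2
    simp at e2
  · obtain ⟨hQne, k, hk⟩ := aux_q_val_even (p := p) hns c0 c1 hc01
    have hc2ne : c2 ≠ 0 := by
      intro h'
      rw [h'] at key
      have : T * (c0^2 - c0*c1 + c1^2) = 0 := by linear_combination key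
      apply hQne
      rcases mul_eq_zero.mp this with h'' | h''
      · exact absurd h'' hT0
      · exact h''
    have eq2 : (4:K) * (T * (c0^2 - c0*c1 + c1^2)) = (-3 : K) * (T * (T * (c2 * c2))) := by
      linear_combination 4 * key
    have h4ne : (4:K) ≠ 0 := by norm_num
    have hm3ne : (-3:K) ≠ 0 := by norm_num
    have hval := congrArg Padic.valuation eq2
    rw [Padic.valuation_mul h4ne (mul_ne_zero hT0 hQne),
      Padic.valuation_mul hT0 hQne,
      Padic.valuation_mul hm3ne (mul_ne_zero hT0 (mul_ne_zero hT0 (mul_ne_zero hc2ne hc2ne))),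
      Padic.valuation_mul hT0 (mul_ne_zero hT0 (mul_ne_zero hc2ne hc2ne)),
      Padic.valuation_mul hT0 (mul_ne_zero hc2ne hc2ne),
      Padic.valuation_mul hc2ne hc2ne] at hval
    have h4val : (4:K).valuation = 0 := by
      have h4c : ((4:K)) = ((4:ℕ) : K) := by norm_cast
      have h40 : padicValNat p 4 = 0 := by
        apply padicValNat.eq_zero_of_not_dvd
        intro hdvd
        have h24 : (4:ℕ) = 2^2 := by norm_num
        rw [h24] at hdvd
        have hpd : p ∣ 2 := Nat.Prime.dvd_of_dvd_pow (Fact.out) hdvd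
        exact hp2 ((Nat.prime_dvd_prime_iff_eq Fact.out Nat.prime_two).mp hpd)
      rw [h4c, Padic.valuation_natCast, h40]
      norm_num
    have hm3val : (-3:K).valuation = 0 := by
      have h3c : ((-3:K)) = (((-3):ℤ) : K) := by norm_cast
      have h3i : padicValInt p (-3) = padicValNat p 3 := by
        rw [padicValInt]
        norm_num
      have h30 : padicValNat p 3 = 0 := by
        apply padicValNat.eq_zero_of_not_dvd
        intro hdvd
        exact hp3' ((Nat.prime_dvd_prime_iff_eq Fact.out (by norm_num)).mp hdvd)
      rw [h3c, Padic.valuation_intCast, h3i, h30]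
      norm_num
    rw [h4val, hm3val, hk, hTdef, Padic.valuation_natCast] at hval
    obtain ⟨m, hm⟩ := hodd
    rw [Nat.factorization_def t hp] at hm
    rw [hm] at hval
    push_cast at hval
    omega
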